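/- With C(s,k) as above and s > l − t, 0 ≤ t ≤ l: C(s, 0) = q^{t(s+t−l+1)} / ((q^{2t} − 1)(q^{2(t−1)} − 1) ⋯ (q^2 − 1)); in particular the minimal degree of C(s,0) (the largest d with C(s,0) ∈ q^d A_0, where A_0 is the ring of rational functions regular at q = 0) is t(s + t − l + 1). -/

import Mathlib

noncomputable section

/-- The field `ℚ(q)` of rational functions. -/
abbrev K : Type := RatFunc ℚ

/-- The indeterminate `q`. -/
def q : K := RatFunc.X

/-- The balanced quantum integer `[k] = (q^k - q^{-k})/(q - q⁻¹)`. -/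
def qint (k : ℤ) : K := (q ^ k - q ^ (-k)) / (q - q⁻¹)

/-- The quantum factorial `[k]! = [1][2]⋯[k]`. -/
def qfact : ℕ → K
  | 0 => 1
  | k + 1 => qfact k * qint ((k : ℤ) + 1)

/-- The Gaussian binomial coefficient `[c choose d] = [c]!/([c-d]![d]!)` for `c ≥ d ≥ 0`,
and `0` otherwise. -/
def qbinom (c d : ℤ) : K :=
  if d ≤ c ∧ 0 ≤ d then qfact c.toNat / (qfact (c - d).toNat * qfact d.toNat) else 0

/-- The coefficient `a_{t,i}(q) = ∏_{0 ≤ j ≤ i−1} q^{l−t+1}/(q^{2(l−j)} − 1)`,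
with `a_{t,0} = 1`. -/
def att (l t i : ℕ) : K :=
  ∏ j ∈ Finset.range i, q ^ ((l : ℤ) - t + 1) / (q ^ (2 * ((l : ℤ) - j)) - 1)

/-- `C(s,k) = ∑_{i=max(0,l−s−k)}^{min(t,l−k)} a_{t,i}(q) q^{(k−i)(i−l+s+k)}
[l−k choose i] [t−l+s+k choose t−i]`. -/
def Cfun (l t s k : ℕ) : K :=
  ∑ i ∈ Finset.Icc (max 0 ((l : ℤ) - s - k)) (min (t : ℤ) ((l : ℤ) - k)),
    att l t i.toNat * q ^ (((k : ℤ) - i) * (i - l + s + k)) *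
      qbinom ((l : ℤ) - k) i * qbinom ((t : ℤ) - l + s + k) ((t : ℤ) - i)

/-- `A₀ ⊂ ℚ(q)`: the subring of rational functions regular at `q = 0`. -/
def inA0 (f : K) : Prop :=
  ∃ p r : Polynomial ℚ, r.coeff 0 ≠ 0 ∧
    f = algebraMap (Polynomial ℚ) K p / algebraMap (Polynomial ℚ) K r

namespace Aux

lemma hq : q ≠ 0 := RatFunc.X_ne_zero

lemma q_pow_ne_one (n : ℕ) (hn : n ≠ 0) : q ^ n ≠ 1 := by
  intro h
  have hX : (Polynomial.X : Polynomial ℚ) ^ n = 1 := by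
    apply IsFractionRing.injective (Polynomial ℚ) K
    rw [map_pow, map_one]
    simpa [q, RatFunc.algebraMap_X] using h
  have h0 := congrArg (fun p => Polynomial.coeff p 0) hX
  simp [Polynomial.coeff_X_pow, hn, Polynomial.coeff_one] at h0
  omega

lemma q_zpow_ne_one (n : ℤ) (hn : n ≠ 0) : q ^ n ≠ 1 := by
  rcases lt_or_gt_of_ne hn with h | h
  · intro he
    have h1 : q ^ (-n) = 1 := by
      rw [← inv_inv (q ^ (-n)), ← zpow_neg, neg_neg, he, inv_one]
    rw [show -n = ((-n).toNat : ℤ) by omega, zpow_natCast] at h1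
    exact q_pow_ne_one _ (by omega) h1
  · intro he
    rw [show n = (n.toNat : ℤ) by omega, zpow_natCast] at he
    exact q_pow_ne_one _ (by omega) he

lemma qpow_sub_one_ne_zero (n : ℤ) (hn : n ≠ 0) : q ^ n - 1 ≠ 0 :=
  sub_ne_zero.mpr (q_zpow_ne_one n hn)

lemma hqq : q - q⁻¹ ≠ 0 := by
  intro h
  have h2 : q ^ (2 : ℕ) = 1 := by
    have : q = q⁻¹ := sub_eq_zero.mp h
    calc q ^ (2:ℕ) = q * q := by ring
    _ = q * q⁻¹ := by nth_rewrite 2 [this]; rfl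
    _ = 1 := mul_inv_cancel₀ hq
  exact q_pow_ne_one 2 (by norm_num) h2

lemma qint_eq (k : ℤ) : qint k = q ^ (-k) * (q ^ (2 * k) - 1) / (q - q⁻¹) := by
  unfold qint
  congr 1
  rw [mul_sub, ← zpow_add₀ hq, mul_one, show -k + 2 * k = k by ring]

lemma qint_ne_zero (k : ℤ) (hk : 0 < k) : qint k ≠ 0 := by
  rw [qint_eq]
  exact div_ne_zero (mul_ne_zero (zpow_ne_zero _ hq)
    (qpow_sub_one_ne_zero _ (by omega))) hqq

lemma qfact_ne_zero : ∀ n : ℕ, qfact n ≠ 0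
  | 0 => one_ne_zero
  | n + 1 => mul_ne_zero (qfact_ne_zero n) (qint_ne_zero _ (by omega))

lemma qfact_int_succ (c : ℤ) (h : 1 ≤ c) : qfact c.toNat = qfact (c - 1).toNat * qint c := by
  have h1 : c.toNat = (c - 1).toNat + 1 := by omega
  rw [h1, qfact]
  congr 2
  omega

lemma qbinom_eq_zero_of_lt {c d : ℤ} (h : c < d) : qbinom c d = 0 :=
  if_neg (by rintro ⟨h1, -⟩; omega)

lemma qbinom_eq_zero_of_neg {c d : ℤ} (h : d < 0) : qbinom c d = 0 :=
  if_neg (by rintro ⟨-, h1⟩; omega)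

lemma qbinom_zero_right (c : ℤ) (hc : 0 ≤ c) : qbinom c 0 = 1 := by
  unfold qbinom
  rw [if_pos ⟨hc, le_refl 0⟩, sub_zero, Int.toNat_zero, show qfact 0 = 1 from rfl, mul_one,
    div_self (qfact_ne_zero _)]

lemma qbinom_self (c : ℤ) (hc : 0 ≤ c) : qbinom c c = 1 := by
  unfold qbinom
  rw [if_pos ⟨le_rfl, hc⟩, sub_self, Int.toNat_zero, show qfact 0 = 1 from rfl, one_mul,
    div_self (qfact_ne_zero _)]

end Aux

namespace Aux

lemma qbinom_pascal (c d : ℤ) (hc : 1 ≤ c) :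
    qbinom c d = q ^ d * qbinom (c - 1) d + q ^ (d - c) * qbinom (c - 1) (d - 1) := by
  rcases lt_or_ge d 0 with hd | hd
  · rw [qbinom_eq_zero_of_neg hd, qbinom_eq_zero_of_neg hd, qbinom_eq_zero_of_neg (by omega)]
    ring
  rcases eq_or_lt_of_le hd with hd0 | hdpos
  · rw [← hd0, qbinom_zero_right c (by omega), qbinom_zero_right (c - 1) (by omega),
      qbinom_eq_zero_of_neg (show (0:ℤ) - 1 < 0 by omega)]
    simp
  rcases lt_trichotomy d c with hdc | hdc | hdc
  · -- main case 0 < d < c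
    have e1 : qfact c.toNat = qfact (c - 1).toNat * qint c := qfact_int_succ c hc
    have e2 : qfact (c - d).toNat = qfact (c - 1 - d).toNat * qint (c - d) := by
      rw [qfact_int_succ (c - d) (by omega), show c - d - 1 = c - 1 - d by ring]
    have e3 : qfact d.toNat = qfact (d - 1).toNat * qint d := qfact_int_succ d (by omega)
    have h1 : q ^ d * q ^ (c - d) = q ^ c := by
      rw [← zpow_add₀ hq, show d + (c - d) = c by ring]
    have h2 : q ^ d * q ^ (-(c - d)) = q ^ (d - c) * q ^ d := by
      rw [← zpow_add₀ hq, ← zpow_add₀ hq, show d + -(c - d) = d - c + d by ring]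
    have h3 : q ^ (d - c) * q ^ (-d) = q ^ (-c) := by
      rw [← zpow_add₀ hq, show d - c + -d = -c by ring]
    have key : qint c = q ^ d * qint (c - d) + q ^ (d - c) * qint d := by
      unfold qint
      rw [mul_div_assoc', mul_div_assoc', ← add_div]
      congr 1
      linear_combination h2 + h3 - h1
    unfold qbinom
    rw [if_pos ⟨le_of_lt hdc, hd⟩, if_pos ⟨by omega, hd⟩, if_pos ⟨by omega, by omega⟩,
      show c - 1 - (d - 1) = c - d by ring, e1, e2, e3, key]
    have n4 : qint (c - d) ≠ 0 := qint_ne_zero _ (by omega)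
    have n5 : qint d ≠ 0 := qint_ne_zero _ (by omega)
    set A := qfact (c - 1).toNat with hA
    set B := qfact (c - 1 - d).toNat with hB
    set D := qfact (d - 1).toNat with hD
    have n1 : A ≠ 0 := qfact_ne_zero _
    have n2 : B ≠ 0 := qfact_ne_zero _
    have n3 : D ≠ 0 := qfact_ne_zero _
    field_simp
  · rw [hdc, qbinom_self c (by omega), qbinom_eq_zero_of_lt (show c - 1 < c by omega),
      qbinom_self (c - 1) (by omega), show c - c = 0 by ring]
    simp
  · rw [qbinom_eq_zero_of_lt hdc, qbinom_eq_zero_of_lt (show c - 1 < d by omega),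
      qbinom_eq_zero_of_lt (show c - 1 < d - 1 by omega)]
    ring

lemma qbinom_cast_succ (c : ℤ) (i : ℕ) (h : (i : ℤ) < c) :
    qbinom c ((i : ℤ) + 1) = qbinom c (i : ℤ) * (qint (c - i) / qint ((i : ℤ) + 1)) := by
  unfold qbinom
  rw [if_pos ⟨by omega, by omega⟩, if_pos ⟨by omega, by omega⟩]
  have e2 : qfact (c - i).toNat = qfact (c - ((i : ℤ) + 1)).toNat * qint (c - i) := by
    rw [qfact_int_succ (c - i) (by omega), show c - i - 1 = c - ((i : ℤ) + 1) by ring]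
  have e3 : qfact ((i : ℤ) + 1).toNat = qfact ((i : ℤ)).toNat * qint ((i : ℤ) + 1) := by
    rw [qfact_int_succ _ (by omega), show (i : ℤ) + 1 - 1 = (i : ℤ) by ring]
  rw [e2, e3]
  have n3 : qint (c - i) ≠ 0 := qint_ne_zero _ (by omega)
  have n4 : qint ((i : ℤ) + 1) ≠ 0 := qint_ne_zero _ (by omega)
  set A := qfact c.toNat with hA
  set B := qfact (c - ((i : ℤ) + 1)).toNat with hB
  set D := qfact ((i : ℤ)).toNat with hD
  have n1 : B ≠ 0 := qfact_ne_zero _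
  have n2 : D ≠ 0 := qfact_ne_zero _
  field_simp

end Aux

namespace Aux

def Pq (a b : ℤ) : K := ∏ j ∈ Finset.Ioc a b, (q ^ (2 * j) - 1)

lemma Pq_ne_zero (a b : ℤ) (ha : 0 ≤ a) : Pq a b ≠ 0 := by
  apply Finset.prod_ne_zero_iff.mpr
  intro j hj
  rw [Finset.mem_Ioc] at hj
  exact qpow_sub_one_ne_zero _ (by omega)

lemma Pq_split (a b c : ℤ) (h1 : a ≤ b) (h2 : b ≤ c) : Pq a c = Pq a b * Pq b c := by
  unfold Pq
  rw [← Finset.Ioc_union_Ioc_eq_Ioc h1 h2,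
    Finset.prod_union (by
      simp only [Finset.disjoint_left, Finset.mem_Ioc]
      intro x hx hx2
      omega)]

lemma Pq_self (a : ℤ) : Pq a a = 1 := by
  unfold Pq; simp

lemma Pq_succ_top (a b : ℤ) (h : a ≤ b) : Pq a (b + 1) = Pq a b * (q ^ (2 * (b + 1)) - 1) := by
  rw [Pq_split a b (b + 1) h (by omega)]
  congr 1
  unfold Pq
  rw [show Finset.Ioc b (b + 1) = {b + 1} by ext x; simp [Finset.mem_Ioc]; omega,
    Finset.prod_singleton]

lemma Pq_cons (a b : ℤ) (h : a ≤ b) : Pq (a - 1) b = (q ^ (2 * a) - 1) * Pq a b := by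
  unfold Pq
  rw [show Finset.Ioc (a - 1) b = insert a (Finset.Ioc a b) by
      ext x; simp only [Finset.mem_Ioc, Finset.mem_insert]; omega,
    Finset.prod_insert (by simp [Finset.mem_Ioc])]

lemma Lsum (t m : ℕ) :
    ∑ i ∈ Finset.range (t + 1),
        q ^ ((i : ℤ) * (1 - (m : ℤ))) * Pq (i : ℤ) (t : ℤ) * qbinom (m : ℤ) ((t : ℤ) - (i : ℤ))
      = q ^ ((t : ℤ) * ((m : ℤ) + 1)) := by
  induction m with
  | zero =>
    simp only [Nat.cast_zero]
    rw [Finset.sum_range_succ, Finset.sum_eq_zero, zero_add]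
    · rw [show (t : ℤ) - (t : ℤ) = 0 by ring, qbinom_zero_right 0 le_rfl, Pq_self, mul_one,
        mul_one]
      norm_num [mul_assoc]
    · intro i hi
      rw [Finset.mem_range] at hi
      rw [qbinom_eq_zero_of_lt (by push_cast; omega), mul_zero]
  | succ m ih =>
    have pas : ∀ i ∈ Finset.range (t + 1),
        q ^ ((i : ℤ) * (1 - ((m : ℕ) + 1 : ℕ) : ℤ)) * Pq (i : ℤ) (t : ℤ) *
            qbinom (((m : ℕ) + 1 : ℕ) : ℤ) ((t : ℤ) - (i : ℤ))
          = q ^ ((i : ℤ) * (1 - ((m : ℤ) + 1)) + ((t : ℤ) - (i : ℤ))) * Pq (i : ℤ) (t : ℤ) *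
              qbinom (m : ℤ) ((t : ℤ) - (i : ℤ))
            + q ^ ((i : ℤ) * (1 - ((m : ℤ) + 1)) + ((t : ℤ) - (i : ℤ)) - ((m : ℤ) + 1)) *
                Pq (i : ℤ) (t : ℤ) * qbinom (m : ℤ) ((t : ℤ) - (i : ℤ) - 1) := by
      intro i _
      rw [show (((m : ℕ) + 1 : ℕ) : ℤ) = (m : ℤ) + 1 by push_cast; ring,
        qbinom_pascal ((m : ℤ) + 1) ((t : ℤ) - (i : ℤ)) (by omega),
        show (m : ℤ) + 1 - 1 = (m : ℤ) by ring,
        show (t : ℤ) - (i : ℤ) - ((m : ℤ) + 1) = (t : ℤ) - (i : ℤ) - (m : ℤ) - 1 by ring]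
      have e1 : q ^ ((i:ℤ)*(1-((m:ℤ)+1)) + ((t:ℤ)-(i:ℤ)))
          = q ^ ((i:ℤ)*(1-((m:ℤ)+1))) * q ^ ((t:ℤ)-(i:ℤ)) := zpow_add₀ hq _ _
      have e2 : q ^ ((i:ℤ)*(1-((m:ℤ)+1)) + ((t:ℤ)-(i:ℤ)) - ((m:ℤ)+1))
          = q ^ ((i:ℤ)*(1-((m:ℤ)+1))) * q ^ ((t:ℤ)-(i:ℤ)-(m:ℤ)-1) := by
        rw [← zpow_add₀ hq]; congr 1; ring
      rw [e1, e2]; ring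
    rw [Finset.sum_congr rfl pas, Finset.sum_add_distrib]
    rw [Finset.sum_range_succ' (fun i => q ^ ((i : ℤ) * (1 - ((m : ℤ) + 1)) + ((t : ℤ) - (i : ℤ)))
        * Pq (i : ℤ) (t : ℤ) * qbinom (m : ℤ) ((t : ℤ) - (i : ℤ))) t,
      Finset.sum_range_succ (fun i => q ^ ((i : ℤ) * (1 - ((m : ℤ) + 1)) + ((t : ℤ) - (i : ℤ))
        - ((m : ℤ) + 1)) * Pq (i : ℤ) (t : ℤ) * qbinom (m : ℤ) ((t : ℤ) - (i : ℤ) - 1)) t]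
    have hBt : q ^ (((t : ℕ) : ℤ) * (1 - ((m : ℤ) + 1)) + ((t : ℤ) - ((t : ℕ) : ℤ))
        - ((m : ℤ) + 1)) * Pq ((t : ℕ) : ℤ) (t : ℤ)
        * qbinom (m : ℤ) ((t : ℤ) - ((t : ℕ) : ℤ) - 1) = 0 := by
      rw [qbinom_eq_zero_of_neg (by omega), mul_zero]
    rw [hBt, add_zero, add_right_comm, ← Finset.sum_add_distrib]
    have hstep : ∀ i ∈ Finset.range t,
        (q ^ (((i + 1 : ℕ) : ℤ) * (1 - ((m : ℤ) + 1)) + ((t : ℤ) - ((i + 1 : ℕ) : ℤ)))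
            * Pq ((i + 1 : ℕ) : ℤ) (t : ℤ) * qbinom (m : ℤ) ((t : ℤ) - ((i + 1 : ℕ) : ℤ))
          + q ^ ((i : ℤ) * (1 - ((m : ℤ) + 1)) + ((t : ℤ) - (i : ℤ)) - ((m : ℤ) + 1))
            * Pq (i : ℤ) (t : ℤ) * qbinom (m : ℤ) ((t : ℤ) - (i : ℤ) - 1))
          = q ^ ((t : ℤ)) * (q ^ (((i + 1 : ℕ) : ℤ) * (1 - (m : ℤ)))
            * Pq ((i + 1 : ℕ) : ℤ) (t : ℤ) * qbinom (m : ℤ) ((t : ℤ) - ((i + 1 : ℕ) : ℤ))) := by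
      intro i hi
      rw [Finset.mem_range] at hi
      push_cast
      have hP : Pq (i : ℤ) (t : ℤ) = (q ^ (2 * ((i : ℤ) + 1)) - 1) * Pq ((i : ℤ) + 1) (t : ℤ) := by
        have h2 := Pq_cons ((i : ℤ) + 1) (t : ℤ) (by omega)
        rw [add_sub_cancel_right] at h2
        exact h2
      rw [hP, show (t : ℤ) - (i : ℤ) - 1 = (t : ℤ) - ((i : ℤ) + 1) by ring]
      have hz1 : q ^ (((i : ℤ) + 1) * (1 - ((m : ℤ) + 1)) + ((t : ℤ) - ((i : ℤ) + 1)))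
          = q ^ ((i : ℤ) * (1 - ((m : ℤ) + 1)) + ((t : ℤ) - (i : ℤ)) - ((m : ℤ) + 1)) :=
        congrArg (q ^ ·) (by ring)
      have hz2 : q ^ ((i : ℤ) * (1 - ((m : ℤ) + 1)) + ((t : ℤ) - (i : ℤ)) - ((m : ℤ) + 1))
            * q ^ (2 * ((i : ℤ) + 1))
          = q ^ ((t : ℤ)) * q ^ (((i : ℤ) + 1) * (1 - (m : ℤ))) := by
        rw [← zpow_add₀ hq, ← zpow_add₀ hq]
        exact congrArg (q ^ ·) (by ring)
      rw [hz1]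
      linear_combination (Pq ((i : ℤ) + 1) (t : ℤ) * qbinom (m : ℤ) ((t : ℤ) - ((i : ℤ) + 1))) * hz2
    rw [Finset.sum_congr rfl hstep, ← Finset.mul_sum]
    have hA0 : q ^ (((0 : ℕ) : ℤ) * (1 - ((m : ℤ) + 1)) + ((t : ℤ) - ((0 : ℕ) : ℤ)))
        * Pq ((0 : ℕ) : ℤ) (t : ℤ) * qbinom (m : ℤ) ((t : ℤ) - ((0 : ℕ) : ℤ))
        = q ^ ((t : ℤ)) * (q ^ (((0 : ℕ) : ℤ) * (1 - (m : ℤ))) * Pq ((0 : ℕ) : ℤ) (t : ℤ)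
          * qbinom (m : ℤ) ((t : ℤ) - ((0 : ℕ) : ℤ))) := by
      norm_num [mul_assoc]
    rw [hA0, ← mul_add]
    have ih2 : (∑ i ∈ Finset.range t, q ^ (((i + 1 : ℕ) : ℤ) * (1 - (m : ℤ)))
          * Pq ((i + 1 : ℕ) : ℤ) (t : ℤ) * qbinom (m : ℤ) ((t : ℤ) - ((i + 1 : ℕ) : ℤ)))
        + q ^ (((0 : ℕ) : ℤ) * (1 - (m : ℤ))) * Pq ((0 : ℕ) : ℤ) (t : ℤ)
          * qbinom (m : ℤ) ((t : ℤ) - ((0 : ℕ) : ℤ))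
        = q ^ ((t : ℤ) * ((m : ℤ) + 1)) := by
      rw [← Finset.sum_range_succ' (fun i => q ^ ((i : ℤ) * (1 - (m : ℤ)))
        * Pq (i : ℤ) (t : ℤ) * qbinom (m : ℤ) ((t : ℤ) - (i : ℤ))) t]
      exact ih
    rw [ih2, ← zpow_add₀ hq]
    exact congrArg (q ^ ·) (by push_cast; ring)

end Aux

namespace Aux

lemma attb (l t : ℕ) (ht : t ≤ l) : ∀ i : ℕ, i ≤ t →
    att l t i * qbinom (l : ℤ) (i : ℤ) = q ^ ((i : ℤ) * ((i : ℤ) - (t : ℤ) + 1)) / Pq 0 (i : ℤ) := by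
  intro i
  induction i with
  | zero =>
    intro _
    simp only [Nat.cast_zero]
    rw [show att l t 0 = 1 from Finset.prod_range_zero _, one_mul,
      qbinom_zero_right _ (by omega), Pq_self]
    norm_num
  | succ i IH =>
    intro hi1
    have hi : i ≤ t := by omega
    have hIH := IH hi
    have hil : (i : ℤ) < (l : ℤ) := by push_cast; omega
    push_cast
    rw [show att l t (i + 1) = att l t i *
        (q ^ ((l : ℤ) - t + 1) / (q ^ (2 * ((l : ℤ) - i)) - 1)) from Finset.prod_range_succ _ _,
      qbinom_cast_succ (l : ℤ) i hil,
      Pq_succ_top 0 (i : ℤ) (by omega)]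
    have key : q ^ ((l : ℤ) - t + 1) / (q ^ (2 * ((l : ℤ) - i)) - 1)
        * (qint ((l : ℤ) - i) / qint ((i : ℤ) + 1))
        = q ^ (2 * (i : ℤ) + 2 - t) / (q ^ (2 * ((i : ℤ) + 1)) - 1) := by
      have d1 : q ^ (2 * ((l : ℤ) - i)) - 1 ≠ 0 := qpow_sub_one_ne_zero _ (by omega)
      have d2 : q ^ (2 * ((i : ℤ) + 1)) - 1 ≠ 0 := qpow_sub_one_ne_zero _ (by omega)
      have nN2 : qint ((i : ℤ) + 1) ≠ 0 := qint_ne_zero _ (by omega)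
      have hz : q ^ ((l : ℤ) - t + 1) * q ^ ((i : ℤ) - l)
          = q ^ (2 * (i : ℤ) + 2 - t) * q ^ (-1 - (i : ℤ)) := by
        rw [← zpow_add₀ hq, ← zpow_add₀ hq]
        exact congrArg (q ^ ·) (by ring)
      have key2 : q ^ ((l : ℤ) - t + 1) * qint ((l : ℤ) - i) * (q ^ (2 * ((i : ℤ) + 1)) - 1)
          = q ^ (2 * (i : ℤ) + 2 - t) * (q ^ (2 * ((l : ℤ) - i)) - 1) * qint ((i : ℤ) + 1) := by
        rw [qint_eq ((l : ℤ) - i), qint_eq ((i : ℤ) + 1),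
          show -((l : ℤ) - i) = (i : ℤ) - l by ring,
          show -((i : ℤ) + 1) = -1 - (i : ℤ) by ring]
        rw [← mul_div_assoc, div_mul_eq_mul_div, ← mul_div_assoc, div_eq_div_iff hqq hqq]
        linear_combination ((q ^ (2 * ((l : ℤ) - i)) - 1) * (q ^ (2 * ((i : ℤ) + 1)) - 1)
          * (q - q⁻¹)) * hz
      rw [div_mul_div_comm, div_eq_div_iff (mul_ne_zero d1 nN2) d2]
      linear_combination key2
    rw [show att l t i * (q ^ ((l : ℤ) - t + 1) / (q ^ (2 * ((l : ℤ) - i)) - 1))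
        * (qbinom (l : ℤ) (i : ℤ) * (qint ((l : ℤ) - i) / qint ((i : ℤ) + 1)))
      = att l t i * qbinom (l : ℤ) (i : ℤ)
        * (q ^ ((l : ℤ) - t + 1) / (q ^ (2 * ((l : ℤ) - i)) - 1)
          * (qint ((l : ℤ) - i) / qint ((i : ℤ) + 1))) from by ring, hIH, key]
    have hP : Pq 0 (i : ℤ) ≠ 0 := Pq_ne_zero 0 _ le_rfl
    have d2 : q ^ (2 * ((i : ℤ) + 1)) - 1 ≠ 0 := qpow_sub_one_ne_zero _ (by omega)
    have hz3 : q ^ ((i : ℤ) * ((i : ℤ) - t + 1)) * q ^ (2 * (i : ℤ) + 2 - t)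
        = q ^ (((i : ℤ) + 1) * ((i : ℤ) + 1 - t + 1)) := by
      rw [← zpow_add₀ hq]
      exact congrArg (q ^ ·) (by ring)
    field_simp
    exact hz3

lemma sum_Icc_toRange (n : ℕ) (f : ℤ → K) :
    ∑ i ∈ Finset.Icc (0 : ℤ) (n : ℤ), f i = ∑ i ∈ Finset.range (n + 1), f (i : ℤ) := by
  have hmap : Finset.Icc (0 : ℤ) (n : ℤ)
      = (Finset.range (n + 1)).map ⟨Nat.cast, Nat.cast_injective⟩ := by
    ext x
    simp only [Finset.mem_Icc, Finset.mem_map, Finset.mem_range, Function.Embedding.coeFn_mk]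
    constructor
    · rintro ⟨h0, h1⟩
      exact ⟨x.toNat, by omega, by omega⟩
    · rintro ⟨a, ha, rfl⟩
      omega
  rw [hmap, Finset.sum_map]
  rfl

lemma prod_conv (t : ℕ) : Pq 0 (t : ℤ) = ∏ j ∈ Finset.Icc 1 t, (q ^ (2 * j) - 1) := by
  induction t with
  | zero => simp [Pq_self]
  | succ n ih =>
    rw [show ((n + 1 : ℕ) : ℤ) = (n : ℤ) + 1 by push_cast; ring,
      Pq_succ_top 0 (n : ℤ) (by omega), ih, Finset.prod_Icc_succ_top (by omega)]
    rw [show (2 : ℤ) * ((n : ℤ) + 1) = ((2 * (n + 1) : ℕ) : ℤ) by push_cast; ring, zpow_natCast]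

end Aux

/-- For `s > l − t` and `0 ≤ t ≤ l`:
`C(s,0) = q^{t(s+t−l+1)} / ((q^{2t} − 1)(q^{2(t−1)} − 1) ⋯ (q^2 − 1))`; in particular the
minimal degree of `C(s,0)` at `q = 0` is `t(s+t−l+1)`, i.e.
`C(s,0) ∈ q^d A₀ \ q^{d+1} A₀` with `d = t(s+t−l+1)`. -/
theorem Cfun_zero (l t s : ℕ) (ht : t ≤ l) (hs : (l : ℤ) - t < s) :
    Cfun l t s 0
        = q ^ ((t : ℤ) * ((s : ℤ) + t - l + 1)) / ∏ j ∈ Finset.Icc 1 t, (q ^ (2 * j) - 1) ∧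
    inA0 (q ^ (-((t : ℤ) * ((s : ℤ) + t - l + 1))) * Cfun l t s 0) ∧
    ¬ inA0 (q ^ (-((t : ℤ) * ((s : ℤ) + t - l + 1)) - 1) * Cfun l t s 0) := by
  have hq := Aux.hq
  set M : ℕ := s + t - l with hMdef
  have hM : (M : ℤ) = (s : ℤ) + t - l := by omega
  have hPi : (∏ j ∈ Finset.Icc 1 t, (q ^ (2 * j) - 1)) ≠ 0 := by
    apply Finset.prod_ne_zero_iff.mpr
    intro j hj
    rw [Finset.mem_Icc] at hj
    exact sub_ne_zero.mpr (Aux.q_pow_ne_one _ (by omega))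
  have hmap : algebraMap (Polynomial ℚ) K (∏ j ∈ Finset.Icc 1 t, (Polynomial.X ^ (2 * j) - 1))
      = ∏ j ∈ Finset.Icc 1 t, (q ^ (2 * j) - 1) := by
    rw [map_prod]
    apply Finset.prod_congr rfl
    intro j _
    rw [map_sub, map_pow, map_one, RatFunc.algebraMap_X]
    rfl
  have hcoeff : (∏ j ∈ Finset.Icc 1 t, (Polynomial.X ^ (2 * j) - 1 : Polynomial ℚ)).coeff 0 ≠ 0 := by
    rw [Polynomial.coeff_zero_eq_eval_zero, Polynomial.eval_prod]
    have hev : ∀ j ∈ Finset.Icc 1 t,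
        Polynomial.eval 0 (Polynomial.X ^ (2 * j) - 1 : Polynomial ℚ) = -1 := by
      intro j hj
      rw [Finset.mem_Icc] at hj
      simp [zero_pow (by omega : 2 * j ≠ 0)]
    rw [Finset.prod_congr rfl hev, Finset.prod_const]
    simp
  have Heq : Cfun l t s 0
      = q ^ ((t : ℤ) * ((s : ℤ) + t - l + 1)) / ∏ j ∈ Finset.Icc 1 t, (q ^ (2 * j) - 1) := by
    unfold Cfun
    simp only [Nat.cast_zero, sub_zero, add_zero, zero_sub]
    rw [min_eq_left (by exact_mod_cast ht : (t : ℤ) ≤ (l : ℤ))]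
    have hsub : Finset.Icc (max 0 ((l : ℤ) - s)) (t : ℤ) ⊆ Finset.Icc (0 : ℤ) (t : ℤ) :=
      Finset.Icc_subset_Icc (le_max_left _ _) le_rfl
    have hzero : ∀ x ∈ Finset.Icc (0 : ℤ) (t : ℤ),
        x ∉ Finset.Icc (max 0 ((l : ℤ) - s)) (t : ℤ) →
        att l t x.toNat * q ^ (-x * (x - l + s)) * qbinom (l : ℤ) x
          * qbinom ((t : ℤ) - l + s) ((t : ℤ) - x) = 0 := by
      intro x hx1 hx2
      rw [Finset.mem_Icc] at hx1
      rw [Finset.mem_Icc] at hx2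
      rw [Aux.qbinom_eq_zero_of_lt (show (t : ℤ) - l + s < (t : ℤ) - x by omega), mul_zero]
    rw [Finset.sum_subset hsub hzero]
    rw [Aux.sum_Icc_toRange t (fun x => att l t x.toNat * q ^ (-x * (x - l + s))
      * qbinom (l : ℤ) x * qbinom ((t : ℤ) - l + s) ((t : ℤ) - x))]
    have hpoint : ∀ i ∈ Finset.range (t + 1),
        att l t ((i : ℤ)).toNat * q ^ (-(i : ℤ) * ((i : ℤ) - l + s)) * qbinom (l : ℤ) (i : ℤ)
          * qbinom ((t : ℤ) - l + s) ((t : ℤ) - (i : ℤ))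
        = (Aux.Pq 0 (t : ℤ))⁻¹ * (q ^ ((i : ℤ) * (1 - (M : ℤ))) * Aux.Pq (i : ℤ) (t : ℤ)
            * qbinom (M : ℤ) ((t : ℤ) - (i : ℤ))) := by
      intro i hi
      rw [Finset.mem_range] at hi
      have hit : i ≤ t := by omega
      rw [Int.toNat_natCast, show (t : ℤ) - l + s = (M : ℤ) by omega]
      rw [show att l t i * q ^ (-(i : ℤ) * ((i : ℤ) - l + s)) * qbinom (l : ℤ) (i : ℤ)
            * qbinom (M : ℤ) ((t : ℤ) - (i : ℤ))
          = att l t i * qbinom (l : ℤ) (i : ℤ) * q ^ (-(i : ℤ) * ((i : ℤ) - l + s))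
            * qbinom (M : ℤ) ((t : ℤ) - (i : ℤ)) from by ring,
        Aux.attb l t ht i hit]
      have hsplit : Aux.Pq 0 (t : ℤ) = Aux.Pq 0 (i : ℤ) * Aux.Pq (i : ℤ) (t : ℤ) :=
        Aux.Pq_split 0 (i : ℤ) (t : ℤ) (by omega) (by omega)
      have hz : q ^ ((i : ℤ) * ((i : ℤ) - t + 1)) * q ^ (-(i : ℤ) * ((i : ℤ) - l + s))
          = q ^ ((i : ℤ) * (1 - (M : ℤ))) := by
        rw [← zpow_add₀ hq]
        refine congrArg (q ^ ·) ?_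
        rw [hM]; ring
      have h1 : Aux.Pq 0 (i : ℤ) ≠ 0 := Aux.Pq_ne_zero 0 _ le_rfl
      have h2 : Aux.Pq (i : ℤ) (t : ℤ) ≠ 0 := Aux.Pq_ne_zero _ _ (by omega)
      rw [hsplit, mul_inv, div_eq_mul_inv]
      have hP' : Aux.Pq (i : ℤ) (t : ℤ) * (Aux.Pq (i : ℤ) (t : ℤ))⁻¹ = 1 := mul_inv_cancel₀ h2
      linear_combination ((Aux.Pq 0 (i : ℤ))⁻¹ * qbinom (M : ℤ) ((t : ℤ) - (i : ℤ))) * hz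
        - (q ^ ((i : ℤ) * (1 - (M : ℤ))) * (Aux.Pq 0 (i : ℤ))⁻¹
          * qbinom (M : ℤ) ((t : ℤ) - (i : ℤ))) * hP'
    rw [Finset.sum_congr rfl hpoint, ← Finset.mul_sum, Aux.Lsum t M, Aux.prod_conv,
      inv_mul_eq_div]
    congr 1
    exact congrArg (q ^ ·) (by rw [hM])
  refine ⟨Heq, ?_, ?_⟩
  · rw [Heq]
    have hcalc : q ^ (-((t : ℤ) * ((s : ℤ) + t - l + 1))) *
        (q ^ ((t : ℤ) * ((s : ℤ) + t - l + 1)) / ∏ j ∈ Finset.Icc 1 t, (q ^ (2 * j) - 1))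
        = 1 / ∏ j ∈ Finset.Icc 1 t, (q ^ (2 * j) - 1) := by
      rw [mul_div_assoc', ← zpow_add₀ hq, neg_add_cancel, zpow_zero]
    rw [hcalc]
    exact ⟨1, ∏ j ∈ Finset.Icc 1 t, (Polynomial.X ^ (2 * j) - 1), hcoeff, by rw [map_one, hmap]⟩
  · rintro ⟨p, r, hr0, hpr⟩
    rw [Heq] at hpr
    have hexp : q ^ (-((t : ℤ) * ((s : ℤ) + t - l + 1)) - 1) *
        (q ^ ((t : ℤ) * ((s : ℤ) + t - l + 1)) / ∏ j ∈ Finset.Icc 1 t, (q ^ (2 * j) - 1))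
        = 1 / (q * ∏ j ∈ Finset.Icc 1 t, (q ^ (2 * j) - 1)) := by
      rw [mul_div_assoc', ← zpow_add₀ hq,
        show -((t : ℤ) * ((s : ℤ) + t - l + 1)) - 1 + (t : ℤ) * ((s : ℤ) + t - l + 1) = -1
          from by ring,
        zpow_neg, zpow_one, inv_eq_one_div, div_div]
    rw [hexp] at hpr
    have hrne : algebraMap (Polynomial ℚ) K r ≠ 0 := by
      intro h0
      have hr00 : r = 0 := IsFractionRing.injective (Polynomial ℚ) K (by rw [h0, map_zero])
      rw [hr00] at hr0
      simp at hr0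
    have hqPi : q * ∏ j ∈ Finset.Icc 1 t, (q ^ (2 * j) - 1) ≠ 0 := mul_ne_zero hq hPi
    rw [div_eq_div_iff hqPi hrne, one_mul] at hpr
    have hXr : q * ∏ j ∈ Finset.Icc 1 t, (q ^ (2 * j) - 1)
        = algebraMap (Polynomial ℚ) K
            (Polynomial.X * ∏ j ∈ Finset.Icc 1 t, (Polynomial.X ^ (2 * j) - 1)) := by
      rw [map_mul, hmap, RatFunc.algebraMap_X]
      rfl
    rw [hXr, ← map_mul] at hpr
    have hreq : r = p * (Polynomial.X * ∏ j ∈ Finset.Icc 1 t, (Polynomial.X ^ (2 * j) - 1)) :=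
      IsFractionRing.injective (Polynomial ℚ) K hpr
    have hev := congrArg (fun pp => Polynomial.eval 0 pp) hreq
    simp only [Polynomial.eval_mul, Polynomial.eval_X, zero_mul, mul_zero] at hev
    rw [Polynomial.coeff_zero_eq_eval_zero] at hr0
    exact hr0 hev

end
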